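/- (Convex combinations of two-orientation truncations dominate matrix truncation.) Let A be an m×p×n complex tensor and let 𝐀 : Matrix (Fin m × Fin n) (Fin p) ℂ be its unfolding, 𝐀 (a,i) j = (A i) a j. Let M = c • W₁ with c ≠ 0, W₁ ∈ Matrix.unitaryGroup (Fin n) ℂ, and N = d • W₂ with d ≠ 0, W₂ ∈ Matrix.unitaryGroup (Fin m) ℂ. Suppose A = U ⋆_M S ⋆_M Vᴴ is a t-SVDM of A under ⋆_M with t-rank-k₁ truncation A_{k₁}, and Aᴾ = U' ⋆_N S' ⋆_N (V')ᴴ is a t-SVDM of the permuted tensor Aᴾ under ⋆_N with t-rank-k₂ truncation (Aᴾ)_{k₂}. Then for every α ∈ [0,1] and every matrix B : Matrix (Fin m × Fin n) (Fin p) ℂ with rank B ≤ min(k₁,k₂), ‖A − (α • A_{k₁} + (1−α) • ((Aᴾ)_{k₂})ᴾ)‖_F ≤ ‖𝐀 − B‖_F, where scalar multiples and sums of tensors are taken slicewise and the right-hand norm is the matrix Frobenius norm. -/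

import Mathlib

open scoped BigOperators ComplexConjugate Matrix

noncomputable section

variable {R : Type*}

/-- Mode-3 product of a third-order tensor (encoded by its frontal slices)
with a transform matrix: `(A ×₃ M) i = ∑ j, (M i j) • (A j)`. -/
def mode3 [RCLike R] {ι α β : Type*} [Fintype ι]
    (A : ι → Matrix α β R) (M : Matrix ι ι R) : ι → Matrix α β R :=
  fun i => ∑ j, M i j • A j

/-- Frobenius (entrywise ℓ²) norm of a matrix. -/
def fnorm [RCLike R] {α β : Type*} [Fintype α] [Fintype β] (A : Matrix α β R) : ℝ :=
  Real.sqrt (∑ a, ∑ b, ‖A a b‖ ^ 2)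

/-- Frobenius norm of a tensor: `‖A‖² = ∑ i, ‖A i‖²`. -/
def tnorm [RCLike R] {ι α β : Type*} [Fintype ι] [Fintype α] [Fintype β]
    (A : ι → Matrix α β R) : ℝ :=
  Real.sqrt (∑ i, fnorm (A i) ^ 2)

/-- The ⋆_M product: facewise product in the transform domain, then inverse transform. -/
def tprodM [RCLike R] {ι m p q : Type*} [Fintype ι] [DecidableEq ι] [Fintype p]
    (M : Matrix ι ι R) (A : ι → Matrix m p R) (B : ι → Matrix p q R) :
    ι → Matrix m q R :=
  mode3 (fun i => mode3 A M i * mode3 B M i) M⁻¹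

/-- Conjugate transpose of a tensor under ⋆_M. -/
def tconj [RCLike R] {ι m p : Type*} [Fintype ι] [DecidableEq ι]
    (M : Matrix ι ι R) (A : ι → Matrix m p R) : ι → Matrix p m R :=
  mode3 (fun i => (mode3 A M i)ᴴ) M⁻¹

/-- The identity tensor under ⋆_M. -/
def tId [RCLike R] (m : Type*) [DecidableEq m] {ι : Type*} [Fintype ι] [DecidableEq ι]
    (M : Matrix ι ι R) : ι → Matrix m m R :=
  mode3 (fun _ => (1 : Matrix m m R)) M⁻¹

/-- A square tensor `Q` is ⋆_M-unitary if `Qᴴ ⋆_M Q = Q ⋆_M Qᴴ = I`. -/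
def tUnitary [RCLike R] {ι m : Type*} [Fintype ι] [DecidableEq ι] [Fintype m] [DecidableEq m]
    (M : Matrix ι ι R) (Q : ι → Matrix m m R) : Prop :=
  tprodM M (tconj M Q) Q = tId m M ∧ tprodM M Q (tconj M Q) = tId m M

/-- A t-SVDM of `A`: a factorization `A = U ⋆_M S ⋆_M Vᴴ` with `U`, `V` ⋆_M-unitary and every
transform-domain slice `Ŝ i` diagonal with real, nonnegative, nonincreasing diagonal entries. -/
def IsTSVDM [RCLike R] {m p n : ℕ} (M : Matrix (Fin n) (Fin n) R)
    (A : Fin n → Matrix (Fin m) (Fin p) R)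
    (U : Fin n → Matrix (Fin m) (Fin m) R)
    (S : Fin n → Matrix (Fin m) (Fin p) R)
    (V : Fin n → Matrix (Fin p) (Fin p) R) : Prop :=
  A = tprodM M (tprodM M U S) (tconj M V) ∧
  tUnitary M U ∧ tUnitary M V ∧
  (∀ (i : Fin n) (a : Fin m) (b : Fin p), (a : ℕ) ≠ (b : ℕ) → mode3 S M i a b = 0) ∧
  (∀ (i : Fin n) (a : Fin m) (b : Fin p), (a : ℕ) = (b : ℕ) →
      ∃ r : ℝ, 0 ≤ r ∧ mode3 S M i a b = (r : R)) ∧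
  (∀ (i : Fin n) (a a' : Fin m) (b b' : Fin p), (a : ℕ) = (b : ℕ) → (a' : ℕ) = (b' : ℕ) →
      (a : ℕ) ≤ (a' : ℕ) →
      RCLike.re (mode3 S M i a' b') ≤ RCLike.re (mode3 S M i a b))

/-- Transform-domain slice of a truncation:
(first k columns of Û) * (leading k×k block of Ŝ) * (first k columns of V̂)ᴴ. -/
def truncSlice [RCLike R] {m p : ℕ} (k : ℕ) (Uh : Matrix (Fin m) (Fin m) R)
    (Sh : Matrix (Fin m) (Fin p) R) (Vh : Matrix (Fin p) (Fin p) R) :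
    Matrix (Fin m) (Fin p) R :=
  Matrix.of fun a b =>
    ∑ j : Fin m, ∑ l : Fin p,
      if (j : ℕ) < k ∧ (l : ℕ) < k then Uh a j * Sh j l * star (Vh b l) else 0

/-- The multi-rank-ρ truncation of a t-SVDM (use `ρ = fun _ => k` for the t-rank-k truncation). -/
def truncTensor [RCLike R] {m p n : ℕ} (M : Matrix (Fin n) (Fin n) R)
    (U : Fin n → Matrix (Fin m) (Fin m) R) (S : Fin n → Matrix (Fin m) (Fin p) R)
    (V : Fin n → Matrix (Fin p) (Fin p) R) (ρ : Fin n → ℕ) :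
    Fin n → Matrix (Fin m) (Fin p) R :=
  mode3 (fun i => truncSlice (ρ i) (mode3 U M i) (mode3 S M i) (mode3 V M i)) M⁻¹

/-- The permuted tensor `Aᴾ`: `(Aᴾ c) i j = (A i) c j`. -/
def tperm [RCLike R] {m p n : ℕ} (A : Fin n → Matrix (Fin m) (Fin p) R) :
    Fin m → Matrix (Fin n) (Fin p) R :=
  fun c => Matrix.of fun i j => A i c j

namespace S16
open Matrix

/-- squared Frobenius norm -/
def esq {α β : Type*} [Fintype α] [Fintype β] (A : Matrix α β ℂ) : ℝ :=
  ∑ a, ∑ b, ‖A a b‖ ^ 2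

lemma esq_nonneg {α β : Type*} [Fintype α] [Fintype β] (A : Matrix α β ℂ) : 0 ≤ esq A := by
  apply Finset.sum_nonneg; intro a _; apply Finset.sum_nonneg; intro b _; positivity

lemma fnorm_eq {α β : Type*} [Fintype α] [Fintype β] (A : Matrix α β ℂ) :
    fnorm A = Real.sqrt (esq A) := rfl

lemma fnorm_sq {α β : Type*} [Fintype α] [Fintype β] (A : Matrix α β ℂ) :
    fnorm A ^ 2 = esq A := Real.sq_sqrt (esq_nonneg A)

lemma tnorm_eq {ι α β : Type*} [Fintype ι] [Fintype α] [Fintype β]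
    (A : ι → Matrix α β ℂ) : tnorm A = Real.sqrt (∑ i, esq (A i)) := by
  unfold tnorm; congr 1; exact Finset.sum_congr rfl fun i _ => fnorm_sq (A i)

lemma mode3_apply {ι α β : Type*} [Fintype ι] (A : ι → Matrix α β ℂ)
    (M : Matrix ι ι ℂ) (i : ι) (a : α) (b : β) :
    mode3 A M i a b = ∑ j, M i j * A j a b := by
  simp [mode3, Finset.sum_apply, Matrix.sum_apply]

lemma mode3_mode3 {ι α β : Type*} [Fintype ι] (A : ι → Matrix α β ℂ)
    (M N : Matrix ι ι ℂ) : mode3 (mode3 A M) N = mode3 A (N * M) := by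
  funext i; ext a b
  simp only [mode3_apply, Matrix.mul_apply, Finset.mul_sum, Finset.sum_mul]
  rw [Finset.sum_comm]
  exact Finset.sum_congr rfl fun l _ => Finset.sum_congr rfl fun j _ => by ring

lemma mode3_one {ι α β : Type*} [Fintype ι] [DecidableEq ι] (A : ι → Matrix α β ℂ) :
    mode3 A (1 : Matrix ι ι ℂ) = A := by
  funext i; ext a b
  simp [mode3_apply, Matrix.one_apply, Finset.sum_ite_eq']

/-- cancel: transform then inverse -/
lemma mode3_inv_left {ι α β : Type*} [Fintype ι] [DecidableEq ι] (A : ι → Matrix α β ℂ)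
    {M : Matrix ι ι ℂ} (h : IsUnit M.det) : mode3 (mode3 A M) M⁻¹ = A := by
  rw [mode3_mode3, Matrix.nonsing_inv_mul M h, mode3_one]

lemma mode3_inv_right {ι α β : Type*} [Fintype ι] [DecidableEq ι] (A : ι → Matrix α β ℂ)
    {M : Matrix ι ι ℂ} (h : IsUnit M.det) : mode3 (mode3 A M⁻¹) M = A := by
  rw [mode3_mode3, Matrix.mul_nonsing_inv M h, mode3_one]

/-- key mulVec norm identity -/
lemma sum_sq_mulVec {ι : Type*} [Fintype ι] [DecidableEq ι] (M : Matrix ι ι ℂ) (r : ℝ)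
    (h : Mᴴ * M = (r : ℂ) • 1) (x : ι → ℂ) :
    ∑ a, ‖(M *ᵥ x) a‖ ^ 2 = r * ∑ a, ‖x a‖ ^ 2 := by
  have base : ∀ v : ι → ℂ, ∑ a, ‖v a‖ ^ 2 = (star v ⬝ᵥ v).re := by
    intro v
    simp only [dotProduct, Pi.star_apply, Complex.re_sum]
    refine Finset.sum_congr rfl fun a _ => ?_
    rw [RCLike.star_def, mul_comm, Complex.mul_conj]
    simp [Complex.sq_norm]
  rw [base, base]
  have : star (M *ᵥ x) ⬝ᵥ (M *ᵥ x) = (r : ℂ) * (star x ⬝ᵥ x) := by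
    rw [star_mulVec, ← dotProduct_mulVec, mulVec_mulVec, h, smul_mulVec, one_mulVec,
      dotProduct_smul, smul_eq_mul]
  rw [this]
  simp

lemma esq_mul_unitary {α β : Type*} [Fintype α] [Fintype β] [DecidableEq α]
    (U : Matrix α α ℂ) (hU : Uᴴ * U = 1) (X : Matrix α β ℂ) : esq (U * X) = esq X := by
  have swap : ∀ (Y : Matrix α β ℂ), esq Y = ∑ b, ∑ a, ‖Y a b‖ ^ 2 := by
    intro Y; exact Finset.sum_comm
  rw [swap, swap]
  refine Finset.sum_congr rfl fun b _ => ?_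
  have := sum_sq_mulVec U 1 (by simpa using hU) (fun j => X j b)
  simpa [Matrix.mulVec, Matrix.mul_apply, dotProduct] using this

lemma esq_conjTranspose {α β : Type*} [Fintype α] [Fintype β] (X : Matrix α β ℂ) :
    esq Xᴴ = esq X := by
  unfold esq
  rw [Finset.sum_comm]
  simp [Matrix.conjTranspose_apply]

lemma esq_mul_unitary_right {α β : Type*} [Fintype α] [Fintype β] [DecidableEq β]
    (V : Matrix β β ℂ) (hV : Vᴴ * V = 1) (X : Matrix α β ℂ) : esq (X * Vᴴ) = esq X := by
  rw [← esq_conjTranspose (X * Vᴴ), Matrix.conjTranspose_mul, Matrix.conjTranspose_conjTranspose,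
    esq_mul_unitary V hV, esq_conjTranspose]

lemma bessel_matrix {m' p' r : ℕ} (X : Matrix (Fin m') (Fin p') ℂ)
    (v : Fin r → EuclideanSpace ℂ (Fin p')) (hv : Orthonormal ℂ v) :
    ∑ i, ∑ a, ‖(X *ᵥ (fun b => v i b)) a‖ ^ 2 ≤ esq X := by
  set xrow : Fin m' → EuclideanSpace ℂ (Fin p') :=
    fun a => (WithLp.equiv 2 _).symm (fun b => star (X a b)) with hxrow
  have row : ∀ (a : Fin m') (i : Fin r),
      (X *ᵥ (fun b => v i b)) a = inner ℂ (xrow a) (v i) := by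
    intro a i
    simp [hxrow, PiLp.inner_apply, RCLike.inner_apply, Matrix.mulVec, dotProduct,
      WithLp.equiv_symm_apply, PiLp.toLp_apply, mul_comm]
  calc ∑ i, ∑ a, ‖(X *ᵥ (fun b => v i b)) a‖ ^ 2
      = ∑ a, ∑ i, ‖(inner ℂ (xrow a) (v i) : ℂ)‖ ^ 2 := by
        rw [Finset.sum_comm]
        exact Finset.sum_congr rfl fun a _ => Finset.sum_congr rfl fun i _ => by rw [row]
    _ ≤ ∑ a, ‖xrow a‖ ^ 2 := by
        refine Finset.sum_le_sum fun a _ => ?_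
        have := hv.sum_inner_products_le (xrow a) (s := Finset.univ)
        refine le_trans (le_of_eq ?_) this
        exact Finset.sum_congr rfl fun i _ => by rw [norm_inner_symm]
    _ = esq X := by
        refine Finset.sum_congr rfl fun a _ => ?_
        rw [EuclideanSpace.norm_eq, Real.sq_sqrt (by positivity)]
        simp [hxrow, WithLp.equiv_symm_apply, PiLp.toLp_apply]

lemma bessel_coord {p' r : ℕ} (v : Fin r → EuclideanSpace ℂ (Fin p'))
    (hv : Orthonormal ℂ v) (j : Fin p') : ∑ i, ‖v i j‖ ^ 2 ≤ 1 := by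
  have h := hv.sum_inner_products_le (EuclideanSpace.single j (1 : ℂ)) (s := Finset.univ)
  have e : ∀ i, ‖(inner ℂ (v i) (EuclideanSpace.single j (1 : ℂ)) : ℂ)‖ ^ 2 = ‖v i j‖ ^ 2 := by
    intro i
    rw [EuclideanSpace.inner_single_right]
    simp
  rw [EuclideanSpace.norm_single] at h
  calc ∑ i, ‖v i j‖ ^ 2 = ∑ i, ‖(inner ℂ (v i) (EuclideanSpace.single j (1 : ℂ)) : ℂ)‖ ^ 2 :=
        (Finset.sum_congr rfl fun i _ => (e i).symm)
    _ ≤ ‖(1 : ℂ)‖ ^ 2 := h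
    _ = 1 := by simp

lemma card_tail {p' k : ℕ} :
    ∑ j : Fin p', (if k ≤ (j : ℕ) then (1 : ℝ) else 0) = ((p' - k : ℕ) : ℝ) := by
  rw [Fin.sum_univ_eq_sum_range (fun j => if k ≤ j then (1 : ℝ) else 0), Finset.sum_boole]
  have : (Finset.range p').filter (fun i => k ≤ i) = Finset.Ico k p' := by
    ext i; simp [Finset.mem_filter, Finset.mem_range, Finset.mem_Ico]; omega
  rw [this, Nat.card_Ico]

lemma key_ineq {p' k : ℕ} (g t : Fin p' → ℝ) (hg0 : ∀ j, 0 ≤ g j)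
    (hganti : ∀ i j : Fin p', (i : ℕ) ≤ (j : ℕ) → g j ≤ g i)
    (ht0 : ∀ j, 0 ≤ t j) (ht1 : ∀ j, t j ≤ 1)
    (hsum : (p' : ℝ) - k ≤ ∑ j, t j) :
    ∑ j : Fin p', (if k ≤ (j : ℕ) then g j else 0) ≤ ∑ j, g j * t j := by
  by_cases hk : k < p'
  · set c₀ := g ⟨k, hk⟩ with hc₀
    have hc₀0 : 0 ≤ c₀ := hg0 _
    have step : ∀ j : Fin p',
        (if k ≤ (j : ℕ) then c₀ * (t j - 1) else c₀ * t j) ≤ g j * t j - (if k ≤ (j : ℕ) then g j else 0) := by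
      intro j
      by_cases hj : k ≤ (j : ℕ)
      · simp only [hj, if_pos]
        have h1 : g j ≤ c₀ := hganti ⟨k, hk⟩ j hj
        nlinarith [ht1 j, ht0 j, hg0 j]
      · simp only [hj, if_neg, not_false_iff]
        have h1 : c₀ ≤ g j := hganti j ⟨k, hk⟩ (le_of_not_ge hj)
        nlinarith [ht0 j]
    have hsum2 : (0 : ℝ) ≤ ∑ j : Fin p', (if k ≤ (j : ℕ) then c₀ * (t j - 1) else c₀ * t j) := by
      have expand : ∀ j : Fin p', (if k ≤ (j : ℕ) then c₀ * (t j - 1) else c₀ * t j)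
          = c₀ * t j - c₀ * (if k ≤ (j : ℕ) then (1:ℝ) else 0) := by
        intro j; by_cases hj : k ≤ (j : ℕ) <;> simp [hj] <;> ring
      rw [Finset.sum_congr rfl fun j _ => expand j, Finset.sum_sub_distrib, ← Finset.mul_sum,
        ← Finset.mul_sum, card_tail]
      have hle : ((p' - k : ℕ) : ℝ) ≤ ∑ j, t j := by
        refine le_trans ?_ hsum
        rw [Nat.cast_sub (le_of_lt hk)]
      nlinarith [hc₀0]
    have := Finset.sum_le_sum fun j (_ : j ∈ Finset.univ) => step j
    rw [Finset.sum_sub_distrib] at this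
    linarith
  · have : ∀ j : Fin p', (if k ≤ (j : ℕ) then g j else 0) = 0 := by
      intro j; rw [if_neg]; omega
    rw [Finset.sum_congr rfl fun j _ => this j]
    simp only [Finset.sum_const_zero]
    exact Finset.sum_nonneg fun j _ => mul_nonneg (hg0 j) (ht0 j)

lemma sum_fin_eq_sum_fin {m' p' : ℕ} (f : ℕ → ℝ) (hf : ∀ x, m' ≤ x ∨ p' ≤ x → f x = 0) :
    ∑ a : Fin m', f a = ∑ j : Fin p', f j := by
  rw [Fin.sum_univ_eq_sum_range, Fin.sum_univ_eq_sum_range]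
  have h1 : ∑ x ∈ Finset.range (min m' p'), f x = ∑ x ∈ Finset.range m', f x := by
    refine Finset.sum_subset (by intro x hx; simp at hx ⊢; omega) ?_
    intro x hx hnx
    simp only [Finset.mem_range] at hx hnx
    exact hf x (by omega)
  have h2 : ∑ x ∈ Finset.range (min m' p'), f x = ∑ x ∈ Finset.range p', f x := by
    refine Finset.sum_subset (by intro x hx; simp at hx ⊢; omega) ?_
    intro x hx hnx
    simp only [Finset.mem_range] at hx hnx
    exact hf x (by omega)
  rw [← h1, h2]

lemma diagEY {m' p' : ℕ} (k : ℕ) (S C : Matrix (Fin m') (Fin p') ℂ)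
    (hoff : ∀ (a : Fin m') (b : Fin p'), (a : ℕ) ≠ (b : ℕ) → S a b = 0)
    (hpos : ∀ (a : Fin m') (b : Fin p'), (a : ℕ) = (b : ℕ) → ∃ r : ℝ, 0 ≤ r ∧ S a b = (r : ℂ))
    (hmono : ∀ (a a' : Fin m') (b b' : Fin p'), (a : ℕ) = (b : ℕ) → (a' : ℕ) = (b' : ℕ) →
      (a : ℕ) ≤ (a' : ℕ) → RCLike.re (S a' b') ≤ RCLike.re (S a b))
    (hrank : C.rank ≤ k) :
    (∑ a : Fin m', ∑ b : Fin p', if (a : ℕ) = (b : ℕ) ∧ k ≤ (a : ℕ) then ‖S a b‖ ^ 2 else 0)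
      ≤ esq (S - C) := by
  classical
  -- the diagonal squared values as a function on ℕ
  set s : ℕ → ℝ := fun x =>
    if h : x < m' ∧ x < p' then ‖S ⟨x, h.1⟩ ⟨x, h.2⟩‖ ^ 2 else 0 with hs
  have hs0 : ∀ x, 0 ≤ s x := by
    intro x; rw [hs]; dsimp only; split <;> positivity
  have hs_val : ∀ (a : Fin m') (h : (a : ℕ) < p'), s (a : ℕ) = ‖S a ⟨(a : ℕ), h⟩‖ ^ 2 := by
    intro a h
    simp only [hs]
    rw [dif_pos (⟨a.isLt, h⟩ : (a : ℕ) < m' ∧ (a : ℕ) < p')]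
  have hs_zero : ∀ x : ℕ, ¬(x < m' ∧ x < p') → s x = 0 := by
    intro x h; simp only [hs]; exact dif_neg h
  have hs_re : ∀ x (h1 : x < m') (h2 : x < p'),
      s x = (RCLike.re (S ⟨x, h1⟩ ⟨x, h2⟩)) ^ 2 ∧ 0 ≤ RCLike.re (S ⟨x, h1⟩ ⟨x, h2⟩) := by
    intro x h1 h2
    obtain ⟨rr, hrr0, hrr⟩ := hpos ⟨x, h1⟩ ⟨x, h2⟩ rfl
    have : s x = ‖S ⟨x, h1⟩ ⟨x, h2⟩‖ ^ 2 := by simp only [hs]; exact dif_pos ⟨h1, h2⟩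
    rw [this, hrr]
    constructor
    · simp [Complex.norm_real, abs_of_nonneg hrr0]
    · simp [hrr0]
  have hs_anti : ∀ x y : ℕ, x ≤ y → s y ≤ s x := by
    intro x y hxy
    by_cases hy : y < m' ∧ y < p'
    · have hx : x < m' ∧ x < p' := ⟨lt_of_le_of_lt hxy hy.1, lt_of_le_of_lt hxy hy.2⟩
      obtain ⟨hsy, hry⟩ := hs_re y hy.1 hy.2
      obtain ⟨hsx, hrx⟩ := hs_re x hx.1 hx.2
      rw [hsy, hsx]
      have := hmono ⟨x, hx.1⟩ ⟨y, hy.1⟩ ⟨x, hx.2⟩ ⟨y, hy.2⟩ rfl rfl hxy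
      exact pow_le_pow_left₀ hry this 2
    · have : s y = 0 := hs_zero y hy
      rw [this]; exact hs0 x
  -- kernel of C and orthonormal basis
  set L := Matrix.toEuclideanLin C with hL
  set K := LinearMap.ker L with hK
  have hrankL : C.rank = Module.finrank ℂ (LinearMap.range L) := by
    rw [Matrix.rank_eq_finrank_range_toLin C (PiLp.basisFun 2 ℂ (Fin m'))
      (PiLp.basisFun 2 ℂ (Fin p'))]
    rfl
  have hdim : Module.finrank ℂ K + C.rank = p' := by
    rw [hrankL, add_comm]
    have := LinearMap.finrank_range_add_finrank_ker L
    rw [this]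
    simp [finrank_euclideanSpace]
  set r := Module.finrank ℂ K with hr
  set b := stdOrthonormalBasis ℂ K with hb
  set v : Fin r → EuclideanSpace ℂ (Fin p') := fun i => (K.subtypeₗᵢ) (b i) with hv
  have hvon : Orthonormal ℂ v := b.orthonormal.comp_linearIsometry K.subtypeₗᵢ
  have hker : ∀ i, C *ᵥ (fun bb => v i bb) = 0 := by
    intro i
    have hmem : L (v i) = 0 := LinearMap.mem_ker.mp (b i).2
    have h2 : C *ᵥ (WithLp.equiv 2 (Fin p' → ℂ) (v i)) = WithLp.equiv 2 (Fin m' → ℂ) (L (v i)) :=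
      (Matrix.ofLp_toEuclideanLin_apply C (v i)).symm
    rw [hmem] at h2
    exact h2
  -- coordinate weights
  set t : Fin p' → ℝ := fun j => ∑ i, ‖v i j‖ ^ 2 with ht
  have ht0 : ∀ j, 0 ≤ t j := by intro j; rw [ht]; positivity
  have ht1 : ∀ j, t j ≤ 1 := fun j => bessel_coord v hvon j
  have htsum : ∑ j, t j = (r : ℝ) := by
    rw [ht, Finset.sum_comm]
    have : ∀ i : Fin r, ∑ j, ‖v i j‖ ^ 2 = 1 := by
      intro i
      have hn : ‖v i‖ = 1 := hvon.1 i
      have h2 : ‖v i‖ ^ 2 = ∑ j, ‖v i j‖ ^ 2 := by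
        rw [EuclideanSpace.norm_eq]
        exact Real.sq_sqrt (Finset.sum_nonneg fun _ _ => sq_nonneg _)
      rw [hn] at h2
      rw [← h2]
      norm_num
    rw [Finset.sum_congr rfl fun i _ => this i]
    simp
  have hsum : (p' : ℝ) - k ≤ ∑ j, t j := by
    rw [htsum]
    have : p' ≤ r + k := by omega
    have := Nat.cast_le (α := ℝ) |>.2 this
    push_cast at this
    linarith
  -- mulVec against diagonal S
  have hSv : ∀ (w : EuclideanSpace ℂ (Fin p')) (a : Fin m'),
      (S *ᵥ (fun bb => w bb)) a = if h : (a : ℕ) < p' then S a ⟨a, h⟩ * w ⟨a, h⟩ else 0 := by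
    intro w a
    show (∑ bb, S a bb * w bb) = _
    by_cases h : (a : ℕ) < p'
    · rw [dif_pos h]
      refine Finset.sum_eq_single (⟨(a : ℕ), h⟩ : Fin p') ?_ (fun hc => absurd (Finset.mem_univ _) hc)
      intro bb _ hbb
      have hne : (a : ℕ) ≠ (bb : ℕ) := by
        intro hc; exact hbb (Fin.ext hc.symm)
      rw [hoff a bb hne, zero_mul]
    · rw [dif_neg h]
      refine Finset.sum_eq_zero fun bb _ => ?_
      have hne : (a : ℕ) ≠ (bb : ℕ) := by omega
      rw [hoff a bb hne, zero_mul]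
  -- the central computation
  set T : ℕ → ℝ := fun x => if h : x < p' then t ⟨x, h⟩ else 0 with hT
  have hT_val : ∀ j : Fin p', T (j : ℕ) = t j := by
    intro j; simp only [hT]; exact dif_pos j.isLt
  have hmid : ∑ i, ∑ a, ‖(S *ᵥ (fun bb => v i bb)) a‖ ^ 2 = ∑ j : Fin p', s j * t j := by
    have step1 : ∀ i : Fin r, ∑ a : Fin m', ‖(S *ᵥ (fun bb => v i bb)) a‖ ^ 2
        = ∑ a : Fin m', (if h : (a : ℕ) < p' then s a * ‖v i ⟨a, h⟩‖ ^ 2 else 0) := by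
      intro i
      refine Finset.sum_congr rfl fun a _ => ?_
      rw [hSv]
      by_cases h : (a : ℕ) < p'
      · rw [dif_pos h, dif_pos h]
        rw [hs_val a h, norm_mul, mul_pow]
      · rw [dif_neg h, dif_neg h]; simp
    rw [Finset.sum_congr rfl fun i _ => step1 i, Finset.sum_comm]
    have step2 : ∀ a : Fin m',
        (∑ i : Fin r, if h : (a : ℕ) < p' then s a * ‖v i ⟨a, h⟩‖ ^ 2 else 0)
          = s (a : ℕ) * T (a : ℕ) := by
      intro a
      by_cases h : (a : ℕ) < p'
      · have hTa : T (a : ℕ) = t ⟨(a : ℕ), h⟩ := by simp only [hT]; exact dif_pos h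
        rw [hTa]
        rw [Finset.sum_congr rfl fun i _ => dif_pos h]
        simp only [ht]
        rw [← Finset.mul_sum]
      · have hTa : T (a : ℕ) = 0 := by simp only [hT]; exact dif_neg h
        rw [hTa, mul_zero]
        exact Finset.sum_eq_zero fun i _ => dif_neg h
    have hzero : ∀ x : ℕ, m' ≤ x ∨ p' ≤ x → s x * T x = 0 := by
      intro x hx
      rcases hx with hx | hx
      · rw [hs_zero x (by omega), zero_mul]
      · have : T x = 0 := by simp only [hT]; exact dif_neg (by omega)
        rw [this, mul_zero]
    calc ∑ a : Fin m', (∑ i : Fin r, if h : (a : ℕ) < p' then s a * ‖v i ⟨a, h⟩‖ ^ 2 else 0)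
        = ∑ a : Fin m', s (a : ℕ) * T (a : ℕ) := Finset.sum_congr rfl fun a _ => step2 a
      _ = ∑ j : Fin p', s (j : ℕ) * T (j : ℕ) := sum_fin_eq_sum_fin (fun x => s x * T x) hzero
      _ = ∑ j : Fin p', s (j : ℕ) * t j := Finset.sum_congr rfl fun j _ => by rw [hT_val]
  -- the target tail sum
  set G : ℕ → ℝ := fun x => if k ≤ x then s x else 0 with hG
  have hG_pos : ∀ x : ℕ, k ≤ x → G x = s x := by
    intro x hx; simp only [hG]; exact if_pos hx
  have hG_neg : ∀ x : ℕ, ¬k ≤ x → G x = 0 := by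
    intro x hx; simp only [hG]; exact if_neg hx
  have htail : (∑ a : Fin m', ∑ b : Fin p', if (a : ℕ) = (b : ℕ) ∧ k ≤ (a : ℕ) then ‖S a b‖ ^ 2 else 0)
      = ∑ j : Fin p', (if k ≤ (j : ℕ) then s j else 0) := by
    have inner_eq : ∀ a : Fin m',
        (∑ b : Fin p', if (a : ℕ) = (b : ℕ) ∧ k ≤ (a : ℕ) then ‖S a b‖ ^ 2 else 0)
        = G (a : ℕ) := by
      intro a
      by_cases h : (a : ℕ) < p'
      · rw [Finset.sum_eq_single (⟨(a : ℕ), h⟩ : Fin p')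
          (fun bb _ hbb => if_neg (fun hc => hbb (Fin.ext hc.1.symm)))
          (fun hc => absurd (Finset.mem_univ _) hc)]
        by_cases hk : k ≤ (a : ℕ)
        · rw [if_pos ⟨rfl, hk⟩, hG_pos _ hk, hs_val a h]
        · rw [if_neg (by tauto), hG_neg _ hk]
      · rw [Finset.sum_eq_zero (fun bb _ => if_neg (fun hc => by omega))]
        by_cases hk : k ≤ (a : ℕ)
        · rw [hG_pos _ hk]
          exact (hs_zero (a : ℕ) (by omega)).symm
        · rw [hG_neg _ hk]
    have hzero : ∀ x : ℕ, m' ≤ x ∨ p' ≤ x → G x = 0 := by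
      intro x hx
      by_cases hk : k ≤ x
      · rw [hG_pos _ hk]
        rcases hx with hx | hx
        · exact hs_zero x (by omega)
        · exact hs_zero x (by omega)
      · exact hG_neg _ hk
    calc (∑ a : Fin m', ∑ b : Fin p', if (a : ℕ) = (b : ℕ) ∧ k ≤ (a : ℕ) then ‖S a b‖ ^ 2 else 0)
        = ∑ a : Fin m', G (a : ℕ) := Finset.sum_congr rfl fun a _ => inner_eq a
      _ = ∑ j : Fin p', G (j : ℕ) := sum_fin_eq_sum_fin G hzero
      _ = ∑ j : Fin p', (if k ≤ (j : ℕ) then s j else 0) := Finset.sum_congr rfl fun j _ => by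
            by_cases hk : k ≤ (j : ℕ)
            · rw [hG_pos _ hk, if_pos hk]
            · rw [hG_neg _ hk, if_neg hk]
  -- put it together
  rw [htail]
  have hkey := key_ineq (fun j : Fin p' => s j) t (fun j => hs0 j)
    (fun i j hij => hs_anti i j hij) ht0 ht1 hsum
  refine le_trans hkey ?_
  rw [← hmid]
  have hsub : ∀ i, ∑ a, ‖(S *ᵥ (fun bb => v i bb)) a‖ ^ 2
      = ∑ a, ‖((S - C) *ᵥ (fun bb => v i bb)) a‖ ^ 2 := by
    intro i
    refine Finset.sum_congr rfl fun a _ => ?_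
    rw [Matrix.sub_mulVec, hker i]
    simp
  rw [Finset.sum_congr rfl fun i _ => hsub i]
  exact bessel_matrix (S - C) v hvon

lemma mode3_sub {ι α β : Type*} [Fintype ι] (X Y : ι → Matrix α β ℂ) (M : Matrix ι ι ℂ) :
    mode3 (fun i => X i - Y i) M = fun i => mode3 X M i - mode3 Y M i := by
  funext i; ext a b
  simp [mode3_apply, mul_sub, Finset.sum_sub_distrib, Matrix.sub_apply]

lemma esq_mul_scaled {α β : Type*} [Fintype α] [Fintype β] [DecidableEq α]
    (U : Matrix α α ℂ) (r : ℝ) (hU : Uᴴ * U = (r : ℂ) • 1) (X : Matrix α β ℂ) :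
    esq (U * X) = r * esq X := by
  have swap : ∀ (Y : Matrix α β ℂ), esq Y = ∑ b, ∑ a, ‖Y a b‖ ^ 2 := by
    intro Y; exact Finset.sum_comm
  rw [swap, swap, Finset.mul_sum]
  refine Finset.sum_congr rfl fun b _ => ?_
  have := sum_sq_mulVec U r hU (fun j => X j b)
  simpa [Matrix.mulVec, Matrix.mul_apply, dotProduct] using this

lemma esq_sum_mode3 {n : ℕ} {α β : Type*} [Fintype α] [Fintype β]
    (M : Matrix (Fin n) (Fin n) ℂ) (r : ℝ) (hMHM : Mᴴ * M = (r : ℂ) • 1)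
    (Z : Fin n → Matrix α β ℂ) :
    ∑ i, esq (mode3 Z M i) = r * ∑ i, esq (Z i) := by
  have h1 : ∀ (a : α) (b : β), ∑ i, ‖mode3 Z M i a b‖ ^ 2 = r * ∑ i, ‖Z i a b‖ ^ 2 := by
    intro a b
    have h := sum_sq_mulVec M r hMHM (fun j => Z j a b)
    refine Eq.trans ?_ h
    refine Finset.sum_congr rfl fun i _ => ?_
    rw [mode3_apply]
    rfl
  have swap : ∀ (Y : Fin n → Matrix α β ℂ), ∑ i, esq (Y i) = ∑ a, ∑ b, ∑ i, ‖Y i a b‖ ^ 2 := by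
    intro Y
    unfold esq
    rw [Finset.sum_comm]
    exact Finset.sum_congr rfl fun a _ => Finset.sum_comm
  rw [swap, swap, Finset.mul_sum]
  refine Finset.sum_congr rfl fun a _ => ?_
  rw [Finset.mul_sum]
  exact Finset.sum_congr rfl fun b _ => h1 a b

lemma mode3_tprod {ι α β γ : Type*} [Fintype ι] [DecidableEq ι] [Fintype β]
    {M : Matrix ι ι ℂ} (hdet : IsUnit M.det) (X : ι → Matrix α β ℂ) (Y : ι → Matrix β γ ℂ) :
    mode3 (tprodM M X Y) M = fun i => mode3 X M i * mode3 Y M i :=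
  mode3_inv_right _ hdet

lemma mode3_tconj {ι α β : Type*} [Fintype ι] [DecidableEq ι]
    {M : Matrix ι ι ℂ} (hdet : IsUnit M.det) (X : ι → Matrix α β ℂ) :
    mode3 (tconj M X) M = fun i => (mode3 X M i)ᴴ :=
  mode3_inv_right _ hdet

lemma mode3_tId {α ι : Type*} [DecidableEq α] [Fintype ι] [DecidableEq ι]
    {M : Matrix ι ι ℂ} (hdet : IsUnit M.det) :
    mode3 (tId α M) M = fun _ => (1 : Matrix α α ℂ) :=
  mode3_inv_right _ hdet

lemma truncSlice_eq {m p : ℕ} (k : ℕ) (Uh : Matrix (Fin m) (Fin m) ℂ)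
    (Sh : Matrix (Fin m) (Fin p) ℂ) (Vh : Matrix (Fin p) (Fin p) ℂ) :
    truncSlice k Uh Sh Vh
      = Uh * (Matrix.of fun (j : Fin m) (l : Fin p) => if (j : ℕ) < k ∧ (l : ℕ) < k then Sh j l else 0) * Vhᴴ := by
  ext a b
  simp only [truncSlice, Matrix.mul_apply, Matrix.of_apply, Matrix.conjTranspose_apply,
    Finset.sum_mul, mul_ite, ite_mul, mul_zero, zero_mul]
  rw [Finset.sum_comm]

lemma core {m p n : ℕ} (c : ℂ) (hc : c ≠ 0) (W : Matrix (Fin n) (Fin n) ℂ)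
    (hW : W ∈ Matrix.unitaryGroup (Fin n) ℂ)
    (A : Fin n → Matrix (Fin m) (Fin p) ℂ)
    (U : Fin n → Matrix (Fin m) (Fin m) ℂ)
    (S : Fin n → Matrix (Fin m) (Fin p) ℂ)
    (V : Fin n → Matrix (Fin p) (Fin p) ℂ)
    (hsvd : IsTSVDM (c • W) A U S V) (k : ℕ)
    (B : Matrix (Fin m × Fin n) (Fin p) ℂ) (hB : B.rank ≤ k) :
    ∑ i, esq (A i - truncTensor (c • W) U S V (fun _ => k) i)
      ≤ esq ((Matrix.of fun (ai : Fin m × Fin n) (j : Fin p) => A ai.2 ai.1 j) - B) := by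
  classical
  obtain ⟨hfac, hUu, hVu, hSoff, hSpos, hSmono⟩ := hsvd
  set M : Matrix (Fin n) (Fin n) ℂ := c • W with hMdef
  set nsq : ℝ := Complex.normSq c with hnsq
  have hnsq_pos : 0 < nsq := Complex.normSq_pos.2 hc
  have hstar := Unitary.mem_iff.mp hW
  have hWHW : Wᴴ * W = 1 := by simpa [Matrix.star_eq_conjTranspose] using hstar.1
  have hWWH : W * Wᴴ = 1 := by simpa [Matrix.star_eq_conjTranspose] using hstar.2
  have hMHM : Mᴴ * M = ((nsq : ℝ) : ℂ) • 1 := by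
    rw [hMdef, Matrix.conjTranspose_smul, Matrix.smul_mul, Matrix.mul_smul, hWHW, smul_smul,
      hnsq, Complex.normSq_eq_conj_mul_self]
    rfl
  have hMMH : M * Mᴴ = ((nsq : ℝ) : ℂ) • 1 := by
    rw [hMdef, Matrix.conjTranspose_smul, Matrix.smul_mul, Matrix.mul_smul, hWWH, smul_smul,
      hnsq, Complex.normSq_eq_conj_mul_self, mul_comm]
    rfl
  have hnsqC : ((nsq : ℝ) : ℂ) ≠ 0 := by
    simp only [ne_eq, Complex.ofReal_eq_zero]
    exact ne_of_gt hnsq_pos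
  have hdet : IsUnit M.det := by
    refine Matrix.isUnit_det_of_right_inverse (B := ((nsq : ℂ))⁻¹ • Mᴴ) ?_
    rw [Matrix.mul_smul, hMMH, smul_smul, inv_mul_cancel₀ hnsqC, one_smul]
  set Uh := mode3 U M with hUh
  set Sh := mode3 S M with hSh
  set Vh := mode3 V M with hVh
  -- transform-domain factorization
  have hc1 : mode3 (tprodM M U S) M = fun i => Uh i * Sh i := mode3_tprod hdet U S
  have hc2 : mode3 (tconj M V) M = fun i => (Vh i)ᴴ := mode3_tconj hdet V
  have hAh : mode3 A M = fun i => Uh i * Sh i * (Vh i)ᴴ := by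
    rw [hfac]
    rw [mode3_tprod hdet (tprodM M U S) (tconj M V)]
    funext i
    simp only [hc1, hc2]
  -- facewise unitarity
  have hUunit : ∀ i, (Uh i)ᴴ * Uh i = 1 ∧ Uh i * (Uh i)ᴴ = 1 := by
    intro i
    constructor
    · have h1 := hUu.1
      have h2 := congrFun (congrArg (fun Z => mode3 Z M) h1) i
      simp only [mode3_tprod hdet (tconj M U) U, mode3_tconj hdet U, mode3_tId hdet] at h2
      exact h2
    · have h1 := hUu.2
      have h2 := congrFun (congrArg (fun Z => mode3 Z M) h1) i
      simp only [mode3_tprod hdet U (tconj M U), mode3_tconj hdet U, mode3_tId hdet] at h2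
      exact h2
  have hVunit : ∀ i, (Vh i)ᴴ * Vh i = 1 ∧ Vh i * (Vh i)ᴴ = 1 := by
    intro i
    constructor
    · have h1 := hVu.1
      have h2 := congrFun (congrArg (fun Z => mode3 Z M) h1) i
      simp only [mode3_tprod hdet (tconj M V) V, mode3_tconj hdet V, mode3_tId hdet] at h2
      exact h2
    · have h1 := hVu.2
      have h2 := congrFun (congrArg (fun Z => mode3 Z M) h1) i
      simp only [mode3_tprod hdet V (tconj M V), mode3_tconj hdet V, mode3_tId hdet] at h2
      exact h2
  -- truncation in transform domain
  set T := truncTensor M U S V (fun _ => k) with hT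
  have hTh : mode3 T M = fun i => truncSlice k (Uh i) (Sh i) (Vh i) :=
    mode3_inv_right _ hdet
  -- the per-slice tail sums
  set tail : Fin n → ℝ := fun i =>
    ∑ a : Fin m, ∑ b : Fin p, if (a : ℕ) = (b : ℕ) ∧ k ≤ (a : ℕ) then ‖Sh i a b‖ ^ 2 else 0
    with htaildef
  -- truncation error per slice
  have hslice_err : ∀ i, esq (mode3 A M i - mode3 T M i) = tail i := by
    intro i
    have hTh_i : mode3 T M i = truncSlice k (Uh i) (Sh i) (Vh i) := by rw [hTh]
    set Sh' : Matrix (Fin m) (Fin p) ℂ :=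
      Matrix.of fun (j : Fin m) (l : Fin p) =>
        if (j : ℕ) < k ∧ (l : ℕ) < k then Sh i j l else 0 with hSh'
    have hdecomp : mode3 A M i - mode3 T M i = Uh i * ((Sh i - Sh') * (Vh i)ᴴ) := by
      rw [hTh_i, truncSlice_eq, congrFun hAh i]
      rw [Matrix.sub_mul, Matrix.mul_sub]
      rw [Matrix.mul_assoc, Matrix.mul_assoc]
    rw [hdecomp, esq_mul_scaled (Uh i) 1 (by rw [(hUunit i).1]; simp) _, one_mul,
      esq_mul_unitary_right (Vh i) (hVunit i).1]
    unfold esq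
    rw [htaildef]
    refine Finset.sum_congr rfl fun a _ => Finset.sum_congr rfl fun b _ => ?_
    rw [Matrix.sub_apply]
    by_cases hab : (a : ℕ) = (b : ℕ)
    · by_cases hak : (a : ℕ) < k
      · have : Sh' a b = Sh i a b := by
          simp only [hSh', Matrix.of_apply]
          exact if_pos ⟨hak, by omega⟩
        rw [this, if_neg (by omega)]
        simp
      · have : Sh' a b = 0 := by
          simp only [hSh', Matrix.of_apply]
          exact if_neg (by omega)
        rw [this, if_pos ⟨hab, by omega⟩, sub_zero]
    · have h0 : Sh i a b = 0 := hSoff i a b hab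
      have : Sh' a b = 0 := by
        simp only [hSh', Matrix.of_apply]
        split
        · exact h0
        · rfl
      rw [this, h0, if_neg (by tauto)]
      simp
  -- the big block-transform matrix
  set Kb : Matrix (Fin m × Fin n) (Fin m × Fin n) ℂ :=
    Matrix.of fun x y => if x.1 = y.1 then M x.2 y.2 else 0 with hKb
  have hKmul : ∀ (X : Matrix (Fin m × Fin n) (Fin p) ℂ) (a : Fin m) (i : Fin n) (j : Fin p),
      (Kb * X) (a, i) j = ∑ i', M i i' * X (a, i') j := by
    intro X a i j
    rw [Matrix.mul_apply, Fintype.sum_prod_type]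
    rw [Finset.sum_eq_single a (fun a' _ ha' => Finset.sum_eq_zero fun i' _ => by
        simp only [hKb, Matrix.of_apply]
        rw [if_neg (by simpa using (Ne.symm ha'))]
        exact zero_mul _)
      (fun hc => absurd (Finset.mem_univ _) hc)]
    refine Finset.sum_congr rfl fun i' _ => ?_
    simp [hKb]
  have hKbHK : Kbᴴ * Kb = ((nsq : ℝ) : ℂ) • 1 := by
    ext x y
    rw [Matrix.mul_apply, Fintype.sum_prod_type]
    by_cases hxy : x.1 = y.1
    · rw [Finset.sum_eq_single x.1 (fun a' _ ha' => Finset.sum_eq_zero fun i'' _ => by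
          simp only [Matrix.conjTranspose_apply, hKb, Matrix.of_apply]
          rw [if_neg (by simpa using ha')]
          simp)
        (fun hcon => absurd (Finset.mem_univ _) hcon)]
      have : ∀ i'' : Fin n, Kbᴴ x (x.1, i'') * Kb (x.1, i'') y
          = (starRingEnd ℂ) (M i'' x.2) * M i'' y.2 := by
        intro i''
        simp [hKb, hxy, Complex.star_def]
      rw [Finset.sum_congr rfl fun i'' _ => this i'']
      have hMM := congrFun (congrFun hMHM x.2) y.2
      rw [Matrix.mul_apply] at hMM
      have : ∑ i'' : Fin n, (starRingEnd ℂ) (M i'' x.2) * M i'' y.2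
          = (((nsq : ℝ) : ℂ) • (1 : Matrix (Fin n) (Fin n) ℂ)) x.2 y.2 := by
        rw [← hMM]
        exact Finset.sum_congr rfl fun i'' _ => rfl
      rw [this]
      simp only [Matrix.smul_apply, Matrix.one_apply, smul_eq_mul]
      by_cases h2 : x.2 = y.2
      · rw [if_pos h2, if_pos (Prod.ext hxy h2)]
      · rw [if_neg h2, if_neg (by intro hcon; exact h2 (congrArg Prod.snd hcon))]
    · rw [Finset.sum_eq_zero (fun a' _ => Finset.sum_eq_zero fun i'' _ => by
        simp only [Matrix.conjTranspose_apply, hKb, Matrix.of_apply]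
        by_cases h1 : a' = y.1
        · rw [if_neg (show ¬((a', i'').1 = x.1) from fun h2 => hxy (by
            rw [← h2]; exact h1))]
          simp
        · rw [if_neg (show ¬((a', i'').1 = y.1) from h1)]
          simp)]
      simp only [Matrix.smul_apply, Matrix.one_apply, smul_eq_mul]
      rw [if_neg (by intro hcon; exact hxy (congrArg Prod.fst hcon))]
      simp
  -- unfolding matrices
  set Gd : Matrix (Fin m × Fin n) (Fin p) ℂ :=
    (Matrix.of fun (ai : Fin m × Fin n) (j : Fin p) => A ai.2 ai.1 j) - B with hGd
  set Bi : Fin n → Matrix (Fin m) (Fin p) ℂ :=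
    fun i => Matrix.of fun a j => (Kb * B) (a, i) j with hBi
  have hKG : ∀ (a : Fin m) (i : Fin n) (j : Fin p),
      (Kb * Gd) (a, i) j = mode3 A M i a j - Bi i a j := by
    intro a i j
    rw [hKmul]
    have : ∀ i' : Fin n, M i i' * Gd (a, i') j
        = M i i' * A i' a j - M i i' * B (a, i') j := by
      intro i'
      rw [hGd]
      simp only [Matrix.sub_apply, Matrix.of_apply]
      ring
    rw [Finset.sum_congr rfl fun i' _ => this i', Finset.sum_sub_distrib, mode3_apply]
    simp only [hBi, Matrix.of_apply]
    rw [hKmul]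
  have hgroup : esq (Kb * Gd) = ∑ i, esq (mode3 A M i - Bi i) := by
    unfold esq
    rw [Fintype.sum_prod_type, Finset.sum_comm]
    refine Finset.sum_congr rfl fun i _ => ?_
    refine Finset.sum_congr rfl fun a _ => Finset.sum_congr rfl fun j _ => ?_
    rw [hKG a i j, Matrix.sub_apply]
  have hBi_rank : ∀ i, (Bi i).rank ≤ k := by
    intro i
    set Ei : Matrix (Fin m) (Fin m × Fin n) ℂ :=
      Matrix.of fun a y => if y = (a, i) then 1 else 0 with hEi
    have hBiEq : Bi i = Ei * (Kb * B) := by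
      ext a j
      rw [Matrix.mul_apply]
      rw [Finset.sum_eq_single ((a, i) : Fin m × Fin n) (fun y _ hy => by
          simp only [hEi, Matrix.of_apply]
          rw [if_neg hy, zero_mul])
        (fun hcon => absurd (Finset.mem_univ _) hcon)]
      simp [hEi, hBi]
    rw [hBiEq]
    calc (Ei * (Kb * B)).rank ≤ (Kb * B).rank := Matrix.rank_mul_le_right _ _
      _ ≤ B.rank := Matrix.rank_mul_le_right _ _
      _ ≤ k := hB
  -- per-slice Eckart-Young
  have hslice : ∀ i, tail i ≤ esq (mode3 A M i - Bi i) := by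
    intro i
    set Ci : Matrix (Fin m) (Fin p) ℂ := (Uh i)ᴴ * (Bi i * Vh i) with hCi
    have hCrank : Ci.rank ≤ k := by
      calc Ci.rank ≤ (Bi i * Vh i).rank := Matrix.rank_mul_le_right _ _
        _ ≤ (Bi i).rank := Matrix.rank_mul_le_left _ _
        _ ≤ k := hBi_rank i
    have hres : Uh i * (Ci * (Vh i)ᴴ) = Bi i := by
      rw [hCi]
      calc Uh i * ((Uh i)ᴴ * (Bi i * Vh i) * (Vh i)ᴴ)
          = (Uh i * (Uh i)ᴴ) * (Bi i * (Vh i * (Vh i)ᴴ)) := by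
            simp only [Matrix.mul_assoc]
        _ = Bi i := by rw [(hUunit i).2, (hVunit i).2, Matrix.mul_one, Matrix.one_mul]
    have hdecomp : mode3 A M i - Bi i = Uh i * ((Sh i - Ci) * (Vh i)ᴴ) := by
      rw [congrFun hAh i, ← hres]
      rw [Matrix.sub_mul, Matrix.mul_sub]
      rw [Matrix.mul_assoc]
    rw [hdecomp, esq_mul_scaled (Uh i) 1 (by rw [(hUunit i).1]; simp) _, one_mul,
      esq_mul_unitary_right (Vh i) (hVunit i).1]
    exact diagEY k (Sh i) Ci (hSoff i) (fun a b hab => hSpos i a b hab)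
      (fun a a' b b' h1 h2 h3 => hSmono i a a' b b' h1 h2 h3) hCrank
  -- assemble
  have lhs_eq : ∑ i, esq (mode3 A M i - mode3 T M i) = ∑ i, tail i :=
    Finset.sum_congr rfl fun i _ => hslice_err i
  have lhs_tr : ∑ i, esq (mode3 A M i - mode3 T M i)
      = nsq * ∑ i, esq (A i - T i) := by
    have := esq_sum_mode3 M nsq hMHM (fun i => A i - T i)
    rw [← this]
    refine Finset.sum_congr rfl fun i _ => ?_
    rw [mode3_sub A T M]
  have rhs_tr : esq (Kb * Gd) = nsq * esq Gd := esq_mul_scaled Kb nsq hKbHK Gd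
  have chain : nsq * ∑ i, esq (A i - T i) ≤ nsq * esq Gd := by
    rw [← lhs_tr, lhs_eq, ← rhs_tr, hgroup]
    exact Finset.sum_le_sum fun i _ => hslice i
  exact le_of_mul_le_mul_left chain hnsq_pos

lemma tnorm_le_of_sq {n' m' p' : ℕ} {α' β' : Type*} [Fintype α'] [Fintype β']
    (X : Fin n' → Matrix (Fin m') (Fin p') ℂ) (Y : Matrix α' β' ℂ)
    (h : ∑ i, esq (X i) ≤ esq Y) : tnorm X ≤ fnorm Y := by
  rw [tnorm_eq, fnorm_eq]
  exact Real.sqrt_le_sqrt h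

lemma tnorm_convex {n' m' p' : ℕ} (X Y : Fin n' → Matrix (Fin m') (Fin p') ℂ) (α : ℝ)
    (h0 : 0 ≤ α) (h1 : α ≤ 1) :
    tnorm (fun i => α • X i + (1 - α) • Y i) ≤ α * tnorm X + (1 - α) * tnorm Y := by
  classical
  set flat : (Fin n' → Matrix (Fin m') (Fin p') ℂ) → EuclideanSpace ℂ (Fin n' × Fin m' × Fin p') :=
    fun Z => (WithLp.equiv 2 _).symm (fun z => Z z.1 z.2.1 z.2.2) with hflatdef
  have hnorm : ∀ Z, tnorm Z = ‖flat Z‖ := by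
    intro Z
    rw [tnorm_eq, EuclideanSpace.norm_eq]
    congr 1
    rw [Fintype.sum_prod_type]
    refine Finset.sum_congr rfl fun i _ => ?_
    rw [Fintype.sum_prod_type]
    unfold esq
    refine Finset.sum_congr rfl fun a _ => Finset.sum_congr rfl fun b _ => ?_
    simp [hflatdef, WithLp.equiv_symm_apply, PiLp.toLp_apply]
  have hflat : flat (fun i => α • X i + (1 - α) • Y i) = α • flat X + (1 - α) • flat Y := by
    ext z
    simp [hflatdef, WithLp.equiv_symm_apply, PiLp.toLp_apply, PiLp.add_apply, PiLp.smul_apply,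
      Matrix.add_apply, Matrix.smul_apply]
  rw [hnorm, hnorm, hnorm, hflat]
  calc ‖α • flat X + (1 - α) • flat Y‖ ≤ ‖α • flat X‖ + ‖(1 - α) • flat Y‖ := norm_add_le _ _
    _ = α * ‖flat X‖ + (1 - α) * ‖flat Y‖ := by
        rw [norm_smul, norm_smul, Real.norm_eq_abs, Real.norm_eq_abs,
          abs_of_nonneg h0, abs_of_nonneg (by linarith)]

end S16

open S16

/-- convex combinations of two-orientation truncations dominate matrix
truncation. -/
theorem stmt16 {m p n : ℕ}
    (A : Fin n → Matrix (Fin m) (Fin p) ℂ)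
    (W₁ : Matrix (Fin n) (Fin n) ℂ) (hW₁ : W₁ ∈ Matrix.unitaryGroup (Fin n) ℂ)
    (c : ℂ) (hc : c ≠ 0)
    (W₂ : Matrix (Fin m) (Fin m) ℂ) (hW₂ : W₂ ∈ Matrix.unitaryGroup (Fin m) ℂ)
    (d : ℂ) (hd : d ≠ 0)
    (U : Fin n → Matrix (Fin m) (Fin m) ℂ)
    (S : Fin n → Matrix (Fin m) (Fin p) ℂ)
    (V : Fin n → Matrix (Fin p) (Fin p) ℂ)
    (hsvd : IsTSVDM (c • W₁) A U S V)
    (U' : Fin m → Matrix (Fin n) (Fin n) ℂ)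
    (S' : Fin m → Matrix (Fin n) (Fin p) ℂ)
    (V' : Fin m → Matrix (Fin p) (Fin p) ℂ)
    (hsvd' : IsTSVDM (d • W₂) (tperm A) U' S' V')
    (k₁ k₂ : ℕ)
    (α : ℝ) (hα0 : 0 ≤ α) (hα1 : α ≤ 1)
    (B : Matrix (Fin m × Fin n) (Fin p) ℂ) (hB : Matrix.rank B ≤ min k₁ k₂) :
    tnorm (fun i => A i -
        (α • truncTensor (c • W₁) U S V (fun _ => k₁) i +
          (1 - α) • tperm (truncTensor (d • W₂) U' S' V' (fun _ => k₂)) i)) ≤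
      fnorm ((Matrix.of fun (ai : Fin m × Fin n) (j : Fin p) => A ai.2 ai.1 j) - B) := by
  classical
  set T₁ := truncTensor (c • W₁) U S V (fun _ => k₁) with hT₁
  set T₀ := truncTensor (d • W₂) U' S' V' (fun _ => k₂) with hT₀
  set T₂ := tperm T₀ with hT₂
  set Un : Matrix (Fin m × Fin n) (Fin p) ℂ :=
    Matrix.of fun (ai : Fin m × Fin n) (j : Fin p) => A ai.2 ai.1 j with hUn
  -- orientation 1
  have key1 : tnorm (fun i => A i - T₁ i) ≤ fnorm (Un - B) := by
    refine tnorm_le_of_sq _ _ ?_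
    exact core c hc W₁ hW₁ A U S V hsvd k₁ B (le_trans hB (min_le_left _ _))
  -- orientation 2
  have key2 : tnorm (fun i => A i - T₂ i) ≤ fnorm (Un - B) := by
    refine tnorm_le_of_sq _ _ ?_
    -- permutation matrix for the rows
    set P : Matrix (Fin n × Fin m) (Fin m × Fin n) ℂ :=
      Matrix.of fun x y => if y = (x.2, x.1) then 1 else 0 with hP
    set B' : Matrix (Fin n × Fin m) (Fin p) ℂ := P * B with hB'
    have hPB : ∀ (i : Fin n) (a : Fin m) (j : Fin p), B' (i, a) j = B (a, i) j := by
      intro i a j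
      rw [hB', Matrix.mul_apply]
      rw [Finset.sum_eq_single ((a, i) : Fin m × Fin n) (fun y _ hy => by
          simp only [hP, Matrix.of_apply]
          rw [if_neg hy, zero_mul])
        (fun hcon => absurd (Finset.mem_univ _) hcon)]
      simp [hP]
    have hB'rank : B'.rank ≤ k₂ := by
      calc B'.rank ≤ B.rank := Matrix.rank_mul_le_right _ _
        _ ≤ k₂ := le_trans hB (min_le_right _ _)
    have hcore := core d hd W₂ hW₂ (tperm A) U' S' V' hsvd' k₂ B' hB'rank
    -- rewrite the two sides
    have hlhs : ∑ a, esq (tperm A a - T₀ a) = ∑ i, esq (A i - T₂ i) := by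
      unfold esq
      rw [Finset.sum_comm]
      refine Finset.sum_congr rfl fun i _ => Finset.sum_congr rfl fun a _ =>
        Finset.sum_congr rfl fun j _ => ?_
      simp [tperm, hT₂, Matrix.sub_apply]
    have hrhs : esq ((Matrix.of fun (ai : Fin n × Fin m) (j : Fin p) => tperm A ai.2 ai.1 j) - B')
        = esq (Un - B) := by
      unfold esq
      rw [Fintype.sum_prod_type, Fintype.sum_prod_type, Finset.sum_comm]
      refine Finset.sum_congr rfl fun a _ => Finset.sum_congr rfl fun i _ =>
        Finset.sum_congr rfl fun j _ => ?_
      rw [Matrix.sub_apply, Matrix.sub_apply, hPB i a j]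
      simp [tperm, hUn]
    rw [hlhs, hrhs] at hcore
    exact hcore
  -- convex combination
  have hsplit : (fun i => A i - (α • T₁ i + (1 - α) • T₂ i))
      = fun i => α • (A i - T₁ i) + (1 - α) • (A i - T₂ i) := by
    funext i
    ext a b
    simp only [Matrix.sub_apply, Matrix.add_apply, Matrix.smul_apply, smul_eq_mul,
      Complex.real_smul]
    push_cast
    ring
  rw [hsplit]
  calc tnorm (fun i => α • (A i - T₁ i) + (1 - α) • (A i - T₂ i))
      ≤ α * tnorm (fun i => A i - T₁ i) + (1 - α) * tnorm (fun i => A i - T₂ i) :=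
        tnorm_convex _ _ α hα0 hα1
    _ ≤ α * fnorm (Un - B) + (1 - α) * fnorm (Un - B) := by
        have h2 : (0:ℝ) ≤ 1 - α := by linarith
        exact add_le_add (mul_le_mul_of_nonneg_left key1 hα0)
          (mul_le_mul_of_nonneg_left key2 h2)
    _ = fnorm (Un - B) := by ring
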